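/- Let b, c in GF(q⁴) satisfy c² + (e+1)c = b^q where e = Tr_{GF(q⁴)/GF(q)}(b), and suppose Tr_{GF(q⁴)/GF(q)}(c) = e. Then, with f(X) = X^{q²+q+1} + (X+1)^{q²+q+1}, we have Tr_{GF(q)/GF(2)}(f(c)+b) = Tr_{GF(q)/GF(2)}((1+c+c^{q²})^{q+1}) + Tr_{GF(q²)/GF(2)}(c^{q²+1}). -/

import Mathlib

open Finset

theorem stmt13 (k : ℕ) (hk : 0 < k) (q : ℕ) (hq : q = 2^k) {F : Type*} [Field F] [Fintype F] [DecidableEq F] (hF : Fintype.card F = q^4) (b c : F)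
    (hc : c^2 + ((b + b^q + b^(q^2) + b^(q^3))+1)*c = b^q)
    (htc : (c + c^q + c^(q^2) + c^(q^3)) = (b + b^q + b^(q^2) + b^(q^3))) :
    (∑ i ∈ Finset.range k, ((c^(q^2+q+1) + (c+1)^(q^2+q+1)) + b)^(2^i)) = (∑ i ∈ Finset.range k, ((1+c+c^(q^2))^(q+1))^(2^i)) + (∑ i ∈ Finset.range (2*k), (c^(q^2+1))^(2^i)) := by
  -- characteristic 2
  haveI hchar : CharP F 2 := by
    obtain ⟨n, hp, hn⟩ := FiniteField.card F (ringChar F)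
    have hdvd : ringChar F ∣ 2 := by
      refine hp.dvd_of_dvd_pow (n := 4*k) ?_
      have h1 : ringChar F ∣ ringChar F ^ (n:ℕ) := dvd_pow_self _ n.pos.ne'
      rw [← hn, hF, hq, ← pow_mul, mul_comm] at h1
      exact h1
    have h2 : ringChar F = 2 := (Nat.prime_dvd_prime_iff_eq hp Nat.prime_two).mp hdvd
    rw [← h2]; exact ringChar.charP F
  haveI : Fact (Nat.Prime 2) := ⟨Nat.prime_two⟩
  have htwo : (2:F) = 0 := CharTwo.two_eq_zero
  have hq1 : ∀ x y : F, (x+y)^q = x^q+y^q := by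
    intro x y; rw [hq]; exact add_pow_char_pow x y 2 k
  have hqm : ∀ (x y : F) (m : ℕ), (x+y)^(q^m) = x^(q^m)+y^(q^m) := by
    intro x y m; rw [hq, ← pow_mul]; exact add_pow_char_pow x y 2 (k*m)
  have hcard : ∀ x : F, x^(q^4) = x := fun x => hF ▸ FiniteField.pow_card x
  -- power bookkeeping
  have hb4 : (b^q)^(q^3) = b := by
    rw [← pow_mul, show q*q^3 = q^4 by ring]; exact hcard b
  have hb5 : (b^(q^2))^(q^3) = b^q := by
    rw [← pow_mul, show q^2*q^3 = q^4*q by ring, pow_mul, hcard]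
  have hb6 : (b^(q^3))^(q^3) = b^(q^2) := by
    rw [← pow_mul, show q^3*q^3 = q^4*q^2 by ring, pow_mul, hcard]
  have hc3 : (c^(q^2))^q = c^(q^3) := by
    rw [← pow_mul]; ring
  -- the Frobenius^3 image of hc
  have h1 : (c^(q^3))^2 + ((b + b^q + b^(q^2) + b^(q^3)) + 1) * c^(q^3) = b := by
    have h := congrArg (fun x : F => x^(q^3)) hc
    rw [hqm (c^2) _ 3, mul_pow, hqm _ 1 3, hqm _ (b^(q^3)) 3, hqm _ (b^(q^2)) 3,
      hqm b (b^q) 3, one_pow, hb4, hb5, hb6, pow_right_comm] at h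
    linear_combination h
  -- expansion lemmas
  have E1 : c^(q^2+q+1) = c^(q^2) * c^q * c := by rw [pow_add, pow_add, pow_one]
  have E2 : (c+1)^(q^2+q+1) = (c^(q^2)+1) * (c^q+1) * (c+1) := by
    rw [pow_add, pow_add, pow_one, hqm c 1 2, hq1 c 1, one_pow, one_pow]
  have E3 : (1+c+c^(q^2))^(q+1) = (1 + c^q + c^(q^3)) * (1+c+c^(q^2)) := by
    rw [pow_add, pow_one, hq1 (1+c) _, hq1 1 c, one_pow, hc3]
  have E5 : c^(q^2+1) = c^(q^2) * c := by rw [pow_add, pow_one]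
  have E4 : (c^(q^2+1))^q = c^(q^3) * c^q := by rw [E5, mul_pow, hc3]
  -- the key pointwise identity
  have key : (c^(q^2+q+1) + (c+1)^(q^2+q+1)) + b
      = (1+c+c^(q^2))^(q+1) + (c^(q^2+1) + (c^(q^2+1))^q) := by
    rw [E1, E2, E3, E4, E5]
    linear_combination h1 + c^(q^3) * htc +
      (c^(q^2)*c^q*c + b - c^(q^3) - c^(q^3)*c - c^(q^3)*c^(q^2) - c^(q^3)*c^q
        - (c^(q^3))^2) * htwo
  -- sum manipulation
  have split : ∑ i ∈ Finset.range (2*k), (c^(q^2+1))^(2^i)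
      = (∑ i ∈ Finset.range k, (c^(q^2+1))^(2^i))
        + ∑ i ∈ Finset.range k, ((c^(q^2+1))^q)^(2^i) := by
    rw [two_mul, Finset.sum_range_add]
    congr 1
    refine Finset.sum_congr rfl fun i _ => ?_
    rw [show (2:ℕ)^(k+i) = 2^k*2^i from pow_add 2 k i, pow_mul, ← hq]
  calc ∑ i ∈ Finset.range k, ((c^(q^2+q+1) + (c+1)^(q^2+q+1)) + b)^(2^i)
      = ∑ i ∈ Finset.range k, (((1+c+c^(q^2))^(q+1))^(2^i)
          + ((c^(q^2+1))^(2^i) + ((c^(q^2+1))^q)^(2^i))) := by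
        refine Finset.sum_congr rfl fun i _ => ?_
        rw [key, add_pow_char_pow, add_pow_char_pow]
    _ = (∑ i ∈ Finset.range k, ((1+c+c^(q^2))^(q+1))^(2^i))
          + ((∑ i ∈ Finset.range k, (c^(q^2+1))^(2^i))
            + ∑ i ∈ Finset.range k, ((c^(q^2+1))^q)^(2^i)) := by
        rw [Finset.sum_add_distrib, Finset.sum_add_distrib]
    _ = _ := by rw [split]
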